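/- Suppose G: (0,∞) → ℝ is differentiable and satisfies the ODE s·G'(s) − G(s) = K·s for all s > 0, for a constant K. Then there exists a constant C such that G(s) = K·s·ln s + C·s for all s > 0. -/

import Mathlib

/-- If `G : (0,∞) → ℝ` is differentiable and satisfies `s G'(s) − G(s) = K s` for all
`s > 0`, then there is a constant `C` with `G(s) = K s ln s + C s` for all `s > 0`. -/
theorem stmt_4 (G : ℝ → ℝ) (K : ℝ)
    (hdiff : ∀ s : ℝ, 0 < s → DifferentiableAt ℝ G s)
    (hode : ∀ s : ℝ, 0 < s → s * deriv G s - G s = K * s) :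
    ∃ C : ℝ, ∀ s : ℝ, 0 < s → G s = K * s * Real.log s + C * s := by
  set H : ℝ → ℝ := fun s => G s / s - K * Real.log s with hH
  have hHdiff : ∀ s : ℝ, 0 < s → DifferentiableAt ℝ H s := fun s hs =>
    ((hdiff s hs).div differentiableAt_fun_id hs.ne').sub
      ((Real.differentiableAt_log hs.ne').const_mul K)
  have hH' : ∀ s : ℝ, 0 < s → deriv H s = 0 := by
    intro s hs
    have h1 : deriv H s = (deriv G s * s - G s * 1) / s ^ 2 - K * s⁻¹ := by
      rw [hH]
      rw [deriv_fun_sub ((hdiff s hs).fun_div differentiableAt_fun_id hs.ne')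
        ((Real.differentiableAt_log hs.ne').const_mul K),
        deriv_fun_div (hdiff s hs) differentiableAt_fun_id hs.ne',
        deriv_const_mul _ (Real.differentiableAt_log hs.ne'), Real.deriv_log, deriv_id'']
    have h2 := hode s hs
    rw [h1]
    field_simp
    nlinarith [h2]
  have key : ∀ s : ℝ, 0 < s → H s = H 1 := by
    intro s hs
    apply (convex_Ioi (0:ℝ)).is_const_of_fderivWithin_eq_zero
      (fun x hx => (hHdiff x hx).differentiableWithinAt) ?_ hs (by norm_num)
    intro x hx
    rw [fderivWithin_of_isOpen isOpen_Ioi hx]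
    ext
    simp [← toSpanSingleton_deriv, hH' x hx]
  refine ⟨H 1, fun s hs => ?_⟩
  have h := key s hs
  have : G s / s - K * Real.log s = H 1 := h
  field_simp at this
  nlinarith [this]
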